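/- Let 0 < l₀ < L₀, set A = π(L₀² − l₀²), b₀ = √(A/π + l₀²) − l₀ and t₀ = 2√(A/π) − 2b₀, and define l(t) = (A/π − (b₀ + t/2)²)/(2b₀ + t) and L(t) = (A/π + (b₀ + t/2)²)/(2b₀ + t) for t ∈ [0, t₀). Then l(0) = l₀, L(0) = L₀, 0 < l(t) < L(t) and π(L(t)² − l(t)²) = A for all t ∈ [0, t₀), the functions solve the system of ordinary differential equations l'(t) = −L(t)/(2(L(t) − l(t))) and L'(t) = −l(t)/(2(L(t) − l(t))) on [0, t₀), and l(t) → 0 as t → t₀⁻. -/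

import Mathlib

open Set Filter

noncomputable section

/-- Example 3.6, evolution of an annulus: the explicit radii
`l(t) = (A/π - (b₀+t/2)²)/(2b₀+t)` and `L(t) = (A/π + (b₀+t/2)²)/(2b₀+t)` satisfy
`l(0) = l₀`, `L(0) = L₀`, stay ordered and area-preserving on `[0, t₀)`, solve the ODE
system `l' = -L/(2(L-l))`, `L' = -l/(2(L-l))`, and `l(t) → 0` as `t → t₀⁻`. -/
theorem annulus_evolution (l₀ L₀ A b₀ t₀ : ℝ) (l L : ℝ → ℝ)
    (hl₀ : 0 < l₀) (hL₀ : l₀ < L₀)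
    (hA : A = Real.pi * (L₀^2 - l₀^2))
    (hb : b₀ = Real.sqrt (A / Real.pi + l₀^2) - l₀)
    (ht : t₀ = 2 * Real.sqrt (A / Real.pi) - 2 * b₀)
    (hldef : ∀ t : ℝ, l t = (A / Real.pi - (b₀ + t/2)^2) / (2*b₀ + t))
    (hLdef : ∀ t : ℝ, L t = (A / Real.pi + (b₀ + t/2)^2) / (2*b₀ + t)) :
    l 0 = l₀ ∧ L 0 = L₀ ∧
    (∀ t ∈ Ico (0:ℝ) t₀,
      0 < l t ∧ l t < L t ∧ Real.pi * ((L t)^2 - (l t)^2) = A) ∧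
    (∀ t ∈ Ico (0:ℝ) t₀,
      HasDerivAt l (-(L t) / (2 * (L t - l t))) t ∧
      HasDerivAt L (-(l t) / (2 * (L t - l t))) t) ∧
    Filter.Tendsto l (nhdsWithin t₀ (Iio t₀)) (nhds 0) := by
  have hpi := Real.pi_pos
  have hL0 : 0 < L₀ := hl₀.trans hL₀
  have hc : A / Real.pi = L₀ ^ 2 - l₀ ^ 2 := by
    rw [hA]; field_simp
  have hcpos : 0 < A / Real.pi := by rw [hc]; nlinarith
  have hb0 : b₀ = L₀ - l₀ := by
    have h1 : A / Real.pi + l₀ ^ 2 = L₀ ^ 2 := by rw [hc]; ring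
    rw [hb, h1, Real.sqrt_sq hL0.le]
  have hb0pos : 0 < b₀ := by rw [hb0]; linarith
  have hsq : Real.sqrt (A / Real.pi) ^ 2 = A / Real.pi := Real.sq_sqrt hcpos.le
  have hsqpos : 0 < Real.sqrt (A / Real.pi) := Real.sqrt_pos.mpr hcpos
  -- key bound on [0, t₀)
  have hkey : ∀ t : ℝ, t ∈ Ico (0:ℝ) t₀ →
      0 < 2 * b₀ + t ∧ (b₀ + t / 2) ^ 2 < A / Real.pi := by
    intro t ⟨ht0, htlt⟩
    refine ⟨by linarith, ?_⟩
    have h1 : b₀ + t / 2 < Real.sqrt (A / Real.pi) := by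
      rw [ht] at htlt; linarith
    have h2 : 0 < b₀ + t / 2 := by linarith
    nlinarith
  have hl0eq : l 0 = l₀ := by
    rw [hldef 0, hc, hb0]
    have h2 : 2 * (L₀ - l₀) + 0 ≠ 0 := by intro h; nlinarith
    rw [div_eq_iff h2]; ring
  have hL0eq : L 0 = L₀ := by
    rw [hLdef 0, hc, hb0]
    have h2 : 2 * (L₀ - l₀) + 0 ≠ 0 := by intro h; nlinarith
    rw [div_eq_iff h2]; ring
  refine ⟨hl0eq, hL0eq, ?_, ?_, ?_⟩
  · intro t htm
    obtain ⟨hd, hn⟩ := hkey t htm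
    rw [hldef t, hLdef t]
    refine ⟨div_pos (by linarith) hd, ?_, ?_⟩
    · have hb2 : 0 < b₀ + t / 2 := by linarith [htm.1]
      exact div_lt_div_of_pos_right (by nlinarith) hd
    · rw [div_pow, div_pow, ← sub_div, mul_div_assoc', div_eq_iff (pow_ne_zero 2 hd.ne')]
      field_simp
      ring
  · intro t htm
    obtain ⟨hd, hn⟩ := hkey t htm
    have hb2 : 0 < b₀ + t / 2 := by linarith [htm.1]
    have hdne : (2 * b₀ + t) ≠ 0 := ne_of_gt hd
    have hf : HasDerivAt (fun s : ℝ => b₀ + s / 2) (1 / 2) t := by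
      simpa using ((hasDerivAt_id t).div_const 2).const_add b₀
    have hf2 : HasDerivAt (fun s : ℝ => (b₀ + s / 2) ^ 2)
        (2 * (b₀ + t / 2) ^ 1 * (1 / 2)) t := hf.pow 2
    have hD : HasDerivAt (fun s : ℝ => 2 * b₀ + s) 1 t := by
      simpa using (hasDerivAt_id t).const_add (2 * b₀)
    have hNl : HasDerivAt (fun s : ℝ => A / Real.pi - (b₀ + s / 2) ^ 2)
        (-(b₀ + t / 2)) t := by
      have h := hf2.const_sub (A / Real.pi)
      exact h.congr_deriv (by ring)
    have hNL : HasDerivAt (fun s : ℝ => A / Real.pi + (b₀ + s / 2) ^ 2)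
        (b₀ + t / 2) t := by
      have h := hf2.const_add (A / Real.pi)
      exact h.congr_deriv (by ring)
    have hLl : L t - l t = b₀ + t / 2 := by
      rw [hldef t, hLdef t]
      rw [div_sub_div_same, div_eq_iff hdne]
      ring
    constructor
    · have hder := hNl.div hD hdne
      have hl' : l = fun s => (A / Real.pi - (b₀ + s / 2) ^ 2) / (2 * b₀ + s) :=
        funext hldef
      have hval : -(L t) / (2 * (L t - l t)) =
          (-(b₀ + t / 2) * (2 * b₀ + t) - (A / Real.pi - (b₀ + t / 2) ^ 2) * 1) /
            (2 * b₀ + t) ^ 2 := by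
        rw [hLl, hLdef t, ← neg_div, div_div,
          div_eq_div_iff (ne_of_gt (mul_pos hd (by linarith))) (pow_ne_zero 2 hdne)]
        ring
      rw [hval, hl']
      exact hder
    · have hder := hNL.div hD hdne
      have hL' : L = fun s => (A / Real.pi + (b₀ + s / 2) ^ 2) / (2 * b₀ + s) :=
        funext hLdef
      have hval : -(l t) / (2 * (L t - l t)) =
          ((b₀ + t / 2) * (2 * b₀ + t) - (A / Real.pi + (b₀ + t / 2) ^ 2) * 1) /
            (2 * b₀ + t) ^ 2 := by
        rw [hLl, hldef t, ← neg_div, div_div,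
          div_eq_div_iff (ne_of_gt (mul_pos hd (by linarith))) (pow_ne_zero 2 hdne)]
        ring
      rw [hval, hL']
      exact hder
  · have hl' : l = fun s => (A / Real.pi - (b₀ + s / 2) ^ 2) / (2 * b₀ + s) :=
      funext hldef
    have hdt0 : (2 * b₀ + t₀) ≠ 0 := by
      have h : 2 * b₀ + t₀ = 2 * Real.sqrt (A / Real.pi) := by rw [ht]; ring
      rw [h]; positivity
    have hcont : ContinuousAt l t₀ := by
      rw [hl']
      exact ContinuousAt.div (by fun_prop) (by fun_prop) hdt0
    have hval : l t₀ = 0 := by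
      rw [hldef t₀, ht]
      have : A / Real.pi - (b₀ + (2 * Real.sqrt (A / Real.pi) - 2 * b₀) / 2) ^ 2 = 0 := by
        have : b₀ + (2 * Real.sqrt (A / Real.pi) - 2 * b₀) / 2 = Real.sqrt (A / Real.pi) := by
          ring
        rw [this, hsq]; ring
      rw [this, zero_div]
    have h : Tendsto l (nhdsWithin t₀ (Iio t₀)) (nhds (l t₀)) :=
      hcont.continuousWithinAt
    rw [hval] at h
    exact h
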